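/- Let σ, τ, ρ : ℤ³ → ℂ satisfy equations (S1), (S2), (S3) for the pairs (i,j) = (1,3) and (2,3) for all ν ∈ ℤ³, together with the coincident-index equation (S3*): τ(ν)·τ(ν+2δ₃) + ρ(ν)·σ(ν+2δ₃) = b₃₃·τ(ν+δ₃)² for all ν ∈ ℤ³, where b₃₃ is a constant. Assume b₁₃, b₂₃, b₃₃ are nonzero and τ vanishes nowhere on ℤ³. Define E(ν) = b₁₃^{−ν₁}·b₂₃^{−ν₂}·b₃₃^{−ν₃}, Q(ν) = (E(ν)/b₃₃)·σ(ν+δ₃)/τ(ν) and R(ν) = E(ν)^{−1}·ρ(ν−δ₃)/τ(ν). Then for α ∈ {1,2}, setting ξ_α = a_{α3}·b_{α3}, the Ablowitz–Ladik equations hold for all ν ∈ ℤ³: Q(ν+δ_α−δ₃) − Q(ν) = ξ_α·[1 − R(ν)·Q(ν+δ_α−δ₃)]·Q(ν+δ_α) and R(ν) − R(ν+δ_α−δ₃) = ξ_α·[1 − R(ν)·Q(ν+δ_α−δ₃)]·R(ν−δ₃). -/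

import Mathlib

/-- The standard basis vectors of `ℤ³`. -/
def δZ (i : Fin 3) : Fin 3 → ℤ := fun j => if j = i then 1 else 0

lemma aux1 (A bα b33 e t t3 ta ta3 t33 sa3 s33 sa33 r : ℂ)
    (hA : sa3 * t33 - ta3 * s33 = A * t3 * sa33)
    (hC : t * ta3 + r * sa3 = bα * ta * t3)
    (hD : t * t33 + r * s33 = b33 * t3 ^ 2)
    (hbα : bα ≠ 0) (hb33 : b33 ≠ 0) (he : e ≠ 0)
    (ht3 : t3 ≠ 0) (hta : ta ≠ 0) (hta3 : ta3 ≠ 0) :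
    e / bα / b33 * sa3 / ta - e / b33 / b33 * s33 / t3
      = A * bα * (1 - (e / b33)⁻¹ * r / t3 * (e / bα / b33 * sa3 / ta))
          * (e / bα / b33 / b33 * sa33 / ta3) := by
  rw [inv_div]
  field_simp
  refine mul_right_cancel₀ ht3 ?_
  linear_combination (-(sa3*ta3))*hD + (s33*ta3 + A*sa33*t3)*hC + (t*ta3)*hA

lemma aux2 (A bα b33 e t t3 ta ta3 tam3 sa3 r ram3 rm3 : ℂ)
    (hB : tam3 * r - ram3 * t = A * rm3 * ta)
    (hC : t * ta3 + r * sa3 = bα * ta * t3)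
    (hD' : tam3 * ta3 + ram3 * sa3 = b33 * ta ^ 2)
    (hbα : bα ≠ 0) (hb33 : b33 ≠ 0) (he : e ≠ 0)
    (ht : t ≠ 0) (ht3 : t3 ≠ 0) (hta : ta ≠ 0) :
    (e / b33)⁻¹ * r / t3 - (e / bα)⁻¹ * ram3 / ta
      = A * bα * (1 - (e / b33)⁻¹ * r / t3 * (e / bα / b33 * sa3 / ta))
          * (e⁻¹ * rm3 / t) := by
  rw [inv_div, inv_div]
  field_simp
  refine mul_right_cancel₀ hta ?_
  linear_combination (-(t*r))*hD' + (t*ram3 + A*rm3*ta)*hC + (t*ta3)*hB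

theorem stmt12 (σ τ ρ : (Fin 3 → ℤ) → ℂ) (a b : Fin 3 → Fin 3 → ℂ) (b33 : ℂ)
    (hS1 : ∀ (ν : Fin 3 → ℤ) (i : Fin 3), i = 0 ∨ i = 1 →
      σ (ν + δZ i) * τ (ν + δZ 2) - τ (ν + δZ i) * σ (ν + δZ 2)
        = a i 2 * τ ν * σ (ν + δZ i + δZ 2))
    (hS2 : ∀ (ν : Fin 3 → ℤ) (i : Fin 3), i = 0 ∨ i = 1 →
      τ (ν + δZ i) * ρ (ν + δZ 2) - ρ (ν + δZ i) * τ (ν + δZ 2)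
        = a i 2 * ρ ν * τ (ν + δZ i + δZ 2))
    (hS3 : ∀ (ν : Fin 3 → ℤ) (i : Fin 3), i = 0 ∨ i = 1 →
      τ ν * τ (ν + δZ i + δZ 2) + ρ ν * σ (ν + δZ i + δZ 2)
        = b i 2 * τ (ν + δZ i) * τ (ν + δZ 2))
    (hS3' : ∀ ν : Fin 3 → ℤ,
      τ ν * τ (ν + δZ 2 + δZ 2) + ρ ν * σ (ν + δZ 2 + δZ 2)
        = b33 * (τ (ν + δZ 2)) ^ 2)
    (hb13 : b 0 2 ≠ 0) (hb23 : b 1 2 ≠ 0) (hb33 : b33 ≠ 0)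
    (hτ : ∀ ν, τ ν ≠ 0)
    (E Q R : (Fin 3 → ℤ) → ℂ)
    (hE : ∀ ν : Fin 3 → ℤ,
      E ν = (b 0 2) ^ (-ν 0) * (b 1 2) ^ (-ν 1) * b33 ^ (-ν 2))
    (hQ : ∀ ν : Fin 3 → ℤ, Q ν = (E ν / b33) * σ (ν + δZ 2) / τ ν)
    (hR : ∀ ν : Fin 3 → ℤ, R ν = (E ν)⁻¹ * ρ (ν - δZ 2) / τ ν) :
    ∀ α : Fin 3, α = 0 ∨ α = 1 → ∀ ν : Fin 3 → ℤ,
      (Q (ν + δZ α - δZ 2) - Q ν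
        = (a α 2 * b α 2) * (1 - R ν * Q (ν + δZ α - δZ 2)) * Q (ν + δZ α)) ∧
      (R ν - R (ν + δZ α - δZ 2)
        = (a α 2 * b α 2) * (1 - R ν * Q (ν + δZ α - δZ 2)) * R (ν - δZ 2)) := by
  have heE : ∀ m, E m ≠ 0 := by
    intro m
    rw [hE]
    exact mul_ne_zero (mul_ne_zero (zpow_ne_zero _ hb13) (zpow_ne_zero _ hb23))
      (zpow_ne_zero _ hb33)
  have hE0 : ∀ m : Fin 3 → ℤ, E (m + δZ 0) = E m / b 0 2 := by
    intro m
    rw [hE, hE]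
    have h0 : (m + δZ 0) 0 = m 0 + 1 := by simp [δZ]
    have h1 : (m + δZ 0) 1 = m 1 := by simp [δZ]
    have h2 : (m + δZ 0) 2 = m 2 := by simp [δZ]
    rw [h0, h1, h2, show -(m 0 + 1) = -m 0 - 1 by ring, zpow_sub₀ hb13, zpow_one]
    ring
  have hE1 : ∀ m : Fin 3 → ℤ, E (m + δZ 1) = E m / b 1 2 := by
    intro m
    rw [hE, hE]
    have h0 : (m + δZ 1) 0 = m 0 := by simp [δZ]
    have h1 : (m + δZ 1) 1 = m 1 + 1 := by simp [δZ]
    have h2 : (m + δZ 1) 2 = m 2 := by simp [δZ]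
    rw [h0, h1, h2, show -(m 1 + 1) = -m 1 - 1 by ring, zpow_sub₀ hb23, zpow_one]
    ring
  have hE2 : ∀ m : Fin 3 → ℤ, E (m + δZ 2) = E m / b33 := by
    intro m
    rw [hE, hE]
    have h0 : (m + δZ 2) 0 = m 0 := by simp [δZ]
    have h1 : (m + δZ 2) 1 = m 1 := by simp [δZ]
    have h2 : (m + δZ 2) 2 = m 2 + 1 := by simp [δZ]
    rw [h0, h1, h2, show -(m 2 + 1) = -m 2 - 1 by ring, zpow_sub₀ hb33, zpow_one]
    ring
  intro α hα ν
  have hbα : b α 2 ≠ 0 := by rcases hα with rfl | rfl <;> assumption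
  have hEα : ∀ m : Fin 3 → ℤ, E (m + δZ α) = E m / b α 2 := by
    rcases hα with rfl | rfl
    exacts [hE0, hE1]
  obtain ⟨μ, rfl⟩ : ∃ μ, ν = μ + δZ 2 := ⟨ν - δZ 2, by abel⟩
  have n1 : μ + δZ 2 + δZ α - δZ 2 = μ + δZ α := by abel
  have n2 : μ + δZ 2 + δZ α = μ + δZ α + δZ 2 := by abel
  have n3 : μ + δZ 2 - δZ 2 = μ := by abel
  have n4 : μ - δZ 2 + δZ α = μ + δZ α - δZ 2 := by abel
  have n5 : μ - δZ 2 + δZ 2 = μ := by abel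
  have n6 : μ + δZ α - δZ 2 + δZ 2 = μ + δZ α := by abel
  rw [n1, n2, n3]
  -- values
  have q_a := hQ (μ + δZ α); rw [hEα] at q_a
  have q_2 := hQ (μ + δZ 2); rw [hE2] at q_2
  have q_a2 := hQ (μ + δZ α + δZ 2); rw [hE2, hEα] at q_a2
  have r_2 := hR (μ + δZ 2); rw [hE2, n3] at r_2
  have r_a := hR (μ + δZ α); rw [hEα] at r_a
  have r_0 := hR μ
  -- system instances
  have hA := hS1 (μ + δZ 2) α hα
  rw [n2] at hA
  have hB := hS2 (μ - δZ 2) α hα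
  rw [n4, n5, n6] at hB
  have hC := hS3 μ α hα
  have hD := hS3' μ
  have hD' := hS3' (μ + δZ α - δZ 2)
  rw [n6] at hD'
  constructor
  · rw [q_a, q_2, q_a2, r_2]
    exact aux1 (a α 2) (b α 2) b33 (E μ) (τ μ) (τ (μ + δZ 2)) (τ (μ + δZ α))
      (τ (μ + δZ α + δZ 2)) (τ (μ + δZ 2 + δZ 2)) (σ (μ + δZ α + δZ 2))
      (σ (μ + δZ 2 + δZ 2)) (σ (μ + δZ α + δZ 2 + δZ 2)) (ρ μ)
      hA hC hD hbα hb33 (heE μ) (hτ _) (hτ _) (hτ _)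
  · rw [r_2, r_a, r_0, q_a]
    exact aux2 (a α 2) (b α 2) b33 (E μ) (τ μ) (τ (μ + δZ 2)) (τ (μ + δZ α))
      (τ (μ + δZ α + δZ 2)) (τ (μ + δZ α - δZ 2)) (σ (μ + δZ α + δZ 2)) (ρ μ)
      (ρ (μ + δZ α - δZ 2)) (ρ (μ - δZ 2))
      hB hC hD' hbα hb33 (heE μ) (hτ _) (hτ _) (hτ _)
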